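/- If the matrix Ξ̂ = [[−P, Rᵀ],[R, Q]] (P, Q symmetric, P𝟏 = 0) is positive semidefinite in a direction (ξ, ε) with Ξ := [[−P, Rᵀ],[R, Q]] admitting an eigenvector (ξ, ε) ∈ D = {(ξ,ε): 𝟏ᵀξ = 0} with eigenvalue β ≥ 0 and ε ≠ 0, then for any positive definite diagonal matrix T⁻¹X one has (ξ, 0, ε)ᵀ J (ξ, 0, ε) = β εᵀ T⁻¹ X ε ≥ 0, where J is the full 3N×3N block Jacobian of the third-order model; hence J is not negative definite on the corresponding subspace. -/

import Mathlib

open Matrix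

/-- If `(ξ, ε)` (with `𝟏ᵀξ = 0`, `ε ≠ 0`) is an eigenvector of the reduced Jacobian
`Ξ = [[-Λ-Γ, Aᵀ+C],[A+F, H+K-X⁻¹]]` with eigenvalue `β ≥ 0`, then for the full
`3N×3N` Jacobian `J` of the third-order model one has
`(ξ,0,ε)ᵀ J (ξ,0,ε) = β εᵀ T⁻¹ X ε ≥ 0`; hence `J` is not negative definite. -/
theorem stmt_18 (N : ℕ) (Λ Γ A C F H K : Matrix (Fin N) (Fin N) ℝ)
    (m d t x : Fin N → ℝ)
    (hm : ∀ j, 0 < m j) (hd : ∀ j, 0 < d j) (ht : ∀ j, 0 < t j) (hx : ∀ j, 0 < x j)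
    (β : ℝ) (hβ : 0 ≤ β)
    (ξ ε : Fin N → ℝ) (hξ : (∑ j, ξ j) = 0) (hε : ε ≠ 0)
    (heig : (Matrix.fromBlocks (-(Λ + Γ)) (Aᵀ + C) (A + F)
        (H + K - Matrix.diagonal fun j => (x j)⁻¹)).mulVec (Sum.elim ξ ε)
      = β • Sum.elim ξ ε) :
    (Sum.elim ξ (Sum.elim 0 ε)) ⬝ᵥ
        (Matrix.fromBlocks 0 (Matrix.fromCols 1 0)
          (Matrix.fromRows
            ((Matrix.diagonal fun j => (m j)⁻¹) * (-(Λ + Γ)))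
            ((Matrix.diagonal fun j => x j / t j) * (A + F)))
          (Matrix.fromBlocks
            (-((Matrix.diagonal fun j => (m j)⁻¹) * Matrix.diagonal d))
            ((Matrix.diagonal fun j => (m j)⁻¹) * (Aᵀ + C))
            0
            ((Matrix.diagonal fun j => x j / t j) *
              (H + K - Matrix.diagonal fun j => (x j)⁻¹)))).mulVec
        (Sum.elim ξ (Sum.elim 0 ε))
      = β * (ε ⬝ᵥ (Matrix.diagonal fun j => x j / t j).mulVec ε) ∧
    0 ≤ (Sum.elim ξ (Sum.elim 0 ε)) ⬝ᵥ
        (Matrix.fromBlocks 0 (Matrix.fromCols 1 0)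
          (Matrix.fromRows
            ((Matrix.diagonal fun j => (m j)⁻¹) * (-(Λ + Γ)))
            ((Matrix.diagonal fun j => x j / t j) * (A + F)))
          (Matrix.fromBlocks
            (-((Matrix.diagonal fun j => (m j)⁻¹) * Matrix.diagonal d))
            ((Matrix.diagonal fun j => (m j)⁻¹) * (Aᵀ + C))
            0
            ((Matrix.diagonal fun j => x j / t j) *
              (H + K - Matrix.diagonal fun j => (x j)⁻¹)))).mulVec
        (Sum.elim ξ (Sum.elim 0 ε)) := by
  set X := Matrix.diagonal fun j => (x j)⁻¹ with hX
  have h2 : (A + F).mulVec ξ + (H + K - X).mulVec ε = β • ε := by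
    funext j
    have := congrFun heig (Sum.inr j)
    simpa [Matrix.fromBlocks_mulVec] using this
  have key : (Sum.elim ξ (Sum.elim 0 ε)) ⬝ᵥ
        (Matrix.fromBlocks 0 (Matrix.fromCols 1 0)
          (Matrix.fromRows
            ((Matrix.diagonal fun j => (m j)⁻¹) * (-(Λ + Γ)))
            ((Matrix.diagonal fun j => x j / t j) * (A + F)))
          (Matrix.fromBlocks
            (-((Matrix.diagonal fun j => (m j)⁻¹) * Matrix.diagonal d))
            ((Matrix.diagonal fun j => (m j)⁻¹) * (Aᵀ + C))
            0
            ((Matrix.diagonal fun j => x j / t j) * (H + K - X)))).mulVec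
        (Sum.elim ξ (Sum.elim 0 ε))
      = β * (ε ⬝ᵥ (Matrix.diagonal fun j => x j / t j).mulVec ε) := by
    simp only [Matrix.fromBlocks_mulVec, Sum.elim_comp_inl, Sum.elim_comp_inr,
      sumElim_dotProduct_sumElim, Matrix.fromRows_mulVec,
      Matrix.fromCols_mulVec_sumElim, Matrix.mulVec_zero, Matrix.zero_mulVec,
      zero_dotProduct, dotProduct_zero, zero_add, add_zero,
      Matrix.one_mulVec]
    have hd : ε ⬝ᵥ (((Matrix.diagonal fun j => x j / t j) * (A + F)).mulVec ξ
        + ((Matrix.diagonal fun j => x j / t j) * (H + K - X)).mulVec ε)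
        = β * (ε ⬝ᵥ (Matrix.diagonal fun j => x j / t j).mulVec ε) := by
      rw [← Matrix.mulVec_mulVec, ← Matrix.mulVec_mulVec, ← Matrix.mulVec_add, h2,
        Matrix.mulVec_smul, dotProduct_smul, smul_eq_mul]
    simp only [dotProduct_add, sumElim_dotProduct_sumElim,
      zero_dotProduct, zero_add]
    rw [← dotProduct_add]; exact hd
  refine ⟨key, key ▸ ?_⟩
  apply mul_nonneg hβ
  simp only [dotProduct, Matrix.mulVec_diagonal]
  apply Finset.sum_nonneg
  intro j _
  have := mul_nonneg (div_nonneg (hx j).le (ht j).le) (mul_self_nonneg (ε j))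
  nlinarith [this]
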